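/- Let p be a prime and n an integer. Then n is not divisible by p^2 + p + 1 if and only if exactly one of the following holds: (i) n = x + p*y + p^2*z for integers x > y ≥ z with x - z ≤ p, or (ii) n = p^2*x + p*y + z for integers x ≥ y > z with x - z ≤ p. Moreover, the two cases are mutually exclusive, and in either case the triple (x, y, z) is uniquely determined by n. -/

import Mathlib

private lemma digit_unique (p a c a' c' : ℤ) (hp : 2 ≤ p)
    (ha : 1 ≤ a) (hap : a ≤ p) (hc : 0 ≤ c)
    (ha' : 1 ≤ a') (hap' : a' ≤ p) (hc' : 0 ≤ c')
    (h : a + p * c = a' + p * c') : a = a' ∧ c = c' := by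
  have hcc : c = c' := by
    rcases lt_trichotomy c c' with h1 | h1 | h1
    · have h2 : p * (c + 1) ≤ p * c' := mul_le_mul_of_nonneg_left (by linarith) (by linarith)
      nlinarith
    · exact h1
    · have h2 : p * (c' + 1) ≤ p * c := mul_le_mul_of_nonneg_left (by linarith) (by linarith)
      nlinarith
  subst hcc
  exact ⟨by linarith, rfl⟩

private lemma div_unique (q z s z' s' : ℤ) (hq : 0 < q)
    (hs : 0 ≤ s) (hs2 : s < q) (hs' : 0 ≤ s') (hs2' : s' < q)
    (h : q * z + s = q * z' + s') : z = z' ∧ s = s' := by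
  have hz : z = z' := by
    rcases lt_trichotomy z z' with h1 | h1 | h1
    · have h2 : q * (z + 1) ≤ q * z' := mul_le_mul_of_nonneg_left (by linarith) (by linarith)
      nlinarith
    · exact h1
    · have h2 : q * (z' + 1) ≤ q * z := mul_le_mul_of_nonneg_left (by linarith) (by linarith)
      nlinarith
  subst hz
  exact ⟨rfl, by linarith⟩

private lemma s_bounds (p a c : ℤ) (hp : 2 ≤ p) (ha : 1 ≤ a) (hap : a ≤ p)
    (hc : 0 ≤ c) (hca : c < a) : 1 ≤ a + p * c ∧ a + p * c ≤ p ^ 2 := by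
  have h1 : 0 ≤ p * c := mul_nonneg (by linarith) hc
  have h2 : p * c ≤ p * (p - 1) := mul_le_mul_of_nonneg_left (by linarith) (by linarith)
  constructor <;> nlinarith

private lemma key_excl (p a c a' c' : ℤ) (hp : 2 ≤ p)
    (ha : 1 ≤ a) (hap : a ≤ p) (hc : 0 ≤ c) (hca : c < a)
    (ha' : 1 ≤ a') (hap' : a' ≤ p) (hc' : 0 ≤ c') (hca' : c' < a')
    (h : (a + p * c) + (a' + p * c') = p ^ 2 + p + 1) : False := by
  have key : a + a' - 1 = p * (p + 1 - (c + c')) := by linear_combination h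
  set k := p + 1 - (c + c') with hk
  have hk1 : k = 1 := by
    rcases lt_trichotomy k 1 with h1 | h1 | h1
    · have h2 : p * k ≤ p * 0 := mul_le_mul_of_nonneg_left (by linarith) (by linarith)
      nlinarith
    · exact h1
    · have h2 : p * 2 ≤ p * k := mul_le_mul_of_nonneg_left (by linarith) (by linarith)
      nlinarith
  -- then a + a' = p + 1 and c + c' = p, but c + c' ≤ a + a' - 2 = p - 1
  have h3 : c + c' = p := by omega
  have h4 : a + a' = p + 1 := by rw [hk1] at key; linarith
  omega

private lemma key_exists (p r : ℤ) (hp : 2 ≤ p) (h1 : 1 ≤ r) (h2 : r ≤ p ^ 2 + p) :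
    (∃ a c : ℤ, r = a + p * c ∧ 1 ≤ a ∧ a ≤ p ∧ 0 ≤ c ∧ c < a) ∨
    (∃ a c : ℤ, p ^ 2 + p + 1 - r = a + p * c ∧ 1 ≤ a ∧ a ≤ p ∧ 0 ≤ c ∧ c < a) := by
  have hp0 : (0:ℤ) < p := by linarith
  set t := (r - 1) % p with ht
  set c := (r - 1) / p with hc
  have hdm : p * c + t = r - 1 := Int.mul_ediv_add_emod (r - 1) p
  have ht0 : 0 ≤ t := Int.emod_nonneg _ (by linarith)
  have htp : t < p := Int.emod_lt_of_pos _ hp0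
  have hc0 : 0 ≤ c := Int.ediv_nonneg (by linarith) (by linarith)
  have hcp : c ≤ p := by
    by_contra h
    push_neg at h
    have h3 : p * (p + 1) ≤ p * c := mul_le_mul_of_nonneg_left (by linarith) (by linarith)
    nlinarith
  rcases lt_or_ge c (t + 1) with hca | hca
  · exact Or.inl ⟨t + 1, c, by linarith, by linarith, by omega, hc0, hca⟩
  · refine Or.inr ⟨p + 1 - (t + 1), p - c, ?_, by omega, by omega, by omega, by omega⟩
    have : p * (p - c) = p * p - p * c := by ring
    nlinarith

private lemma uniq1 (p n : ℤ) (hp : 2 ≤ p) {x y z x' y' z' : ℤ}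
    (h : n = x + p * y + p ^ 2 * z ∧ x > y ∧ y ≥ z ∧ x - z ≤ p)
    (h' : n = x' + p * y' + p ^ 2 * z' ∧ x' > y' ∧ y' ≥ z' ∧ x' - z' ≤ p) :
    x = x' ∧ y = y' ∧ z = z' := by
  obtain ⟨he, h1, h2, h3⟩ := h
  obtain ⟨he', h1', h2', h3'⟩ := h'
  have hb := s_bounds p (x - z) (y - z) hp (by linarith) h3 (by linarith) (by linarith)
  have hb' := s_bounds p (x' - z') (y' - z') hp (by linarith) h3' (by linarith) (by linarith)
  have key : (p ^ 2 + p + 1) * z + ((x - z) + p * (y - z))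
      = (p ^ 2 + p + 1) * z' + ((x' - z') + p * (y' - z')) := by
    linear_combination he' - he
  obtain ⟨hz, hs⟩ := div_unique (p ^ 2 + p + 1) z _ z' _ (by nlinarith)
    (by linarith [hb.1]) (by nlinarith [hb.2]) (by linarith [hb'.1]) (by nlinarith [hb'.2]) key
  obtain ⟨hA, hC⟩ := digit_unique p (x - z) (y - z) (x' - z') (y' - z') hp
    (by linarith) h3 (by linarith) (by linarith) h3' (by linarith) hs
  refine ⟨by linarith, by linarith, hz⟩

private lemma uniq2 (p n : ℤ) (hp : 2 ≤ p) {x y z x' y' z' : ℤ}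
    (h : n = p ^ 2 * x + p * y + z ∧ x ≥ y ∧ y > z ∧ x - z ≤ p)
    (h' : n = p ^ 2 * x' + p * y' + z' ∧ x' ≥ y' ∧ y' > z' ∧ x' - z' ≤ p) :
    x = x' ∧ y = y' ∧ z = z' := by
  obtain ⟨he, h1, h2, h3⟩ := h
  obtain ⟨he', h1', h2', h3'⟩ := h'
  have hb := s_bounds p (x - z) (x - y) hp (by linarith) h3 (by linarith) (by linarith)
  have hb' := s_bounds p (x' - z') (x' - y') hp (by linarith) h3' (by linarith) (by linarith)
  have key : (p ^ 2 + p + 1) * (x - 1) + ((p ^ 2 + p + 1) - ((x - z) + p * (x - y)))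
      = (p ^ 2 + p + 1) * (x' - 1) + ((p ^ 2 + p + 1) - ((x' - z') + p * (x' - y'))) := by
    linear_combination he' - he
  obtain ⟨hz, hs⟩ := div_unique (p ^ 2 + p + 1) (x - 1) _ (x' - 1) _ (by nlinarith)
    (by nlinarith [hb.2]) (by linarith [hb.1]) (by nlinarith [hb'.2]) (by linarith [hb'.1]) key
  have hs2 : (x - z) + p * (x - y) = (x' - z') + p * (x' - y') := by linarith
  obtain ⟨hA, hC⟩ := digit_unique p (x - z) (x - y) (x' - z') (x' - y') hp
    (by linarith) h3 (by linarith) (by linarith) h3' (by linarith) hs2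
  refine ⟨by linarith, by linarith, by linarith⟩

theorem stmt_0 (p : ℕ) (hp : p.Prime) (n : ℤ) :
    (¬ ((p : ℤ) ^ 2 + p + 1 ∣ n) ↔
      Xor' (∃ x y z : ℤ, n = x + p * y + p ^ 2 * z ∧ x > y ∧ y ≥ z ∧ x - z ≤ p)
           (∃ x y z : ℤ, n = p ^ 2 * x + p * y + z ∧ x ≥ y ∧ y > z ∧ x - z ≤ p)) ∧
    (∀ x y z x' y' z' : ℤ,
      (n = x + p * y + p ^ 2 * z ∧ x > y ∧ y ≥ z ∧ x - z ≤ p) →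
      (n = x' + p * y' + p ^ 2 * z' ∧ x' > y' ∧ y' ≥ z' ∧ x' - z' ≤ p) →
      x = x' ∧ y = y' ∧ z = z') ∧
    (∀ x y z x' y' z' : ℤ,
      (n = p ^ 2 * x + p * y + z ∧ x ≥ y ∧ y > z ∧ x - z ≤ p) →
      (n = p ^ 2 * x' + p * y' + z' ∧ x' ≥ y' ∧ y' > z' ∧ x' - z' ≤ p) →
      x = x' ∧ y = y' ∧ z = z') := by
  have hp2 : (2:ℤ) ≤ (p:ℤ) := by exact_mod_cast hp.two_le
  set P : ℤ := (p : ℤ) with hP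
  set q : ℤ := P ^ 2 + P + 1 with hq
  have hq0 : 0 < q := by nlinarith
  -- "not both" lemma
  have notboth : ¬ ((∃ x y z : ℤ, n = x + P * y + P ^ 2 * z ∧ x > y ∧ y ≥ z ∧ x - z ≤ P) ∧
      (∃ x y z : ℤ, n = P ^ 2 * x + P * y + z ∧ x ≥ y ∧ y > z ∧ x - z ≤ P)) := by
    rintro ⟨⟨x, y, z, he, h1, h2, h3⟩, ⟨u, v, w, he', h1', h2', h3'⟩⟩
    have hb := s_bounds P (x - z) (y - z) hp2 (by linarith) h3 (by linarith) (by linarith)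
    have hb' := s_bounds P (u - w) (u - v) hp2 (by linarith) h3' (by linarith) (by linarith)
    -- q * (u - z) = s + s'
    have key : q * (u - z) = ((x - z) + P * (y - z)) + ((u - w) + P * (u - v)) := by
      rw [hq]; linear_combination he - he'
    have hlow : 2 ≤ ((x - z) + P * (y - z)) + ((u - w) + P * (u - v)) := by
      linarith [hb.1, hb'.1]
    have hup : ((x - z) + P * (y - z)) + ((u - w) + P * (u - v)) < 2 * q := by
      nlinarith [hb.2, hb'.2]
    have huz : u - z = 1 := by
      rcases lt_trichotomy (u - z) 1 with hh | hh | hh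
      · have : q * (u - z) ≤ q * 0 := mul_le_mul_of_nonneg_left (by linarith) (by linarith)
        nlinarith
      · exact hh
      · have : q * 2 ≤ q * (u - z) := mul_le_mul_of_nonneg_left (by linarith) (by linarith)
        nlinarith
    rw [huz, mul_one] at key
    exact key_excl P (x - z) (y - z) (u - w) (u - v) hp2 (by linarith) h3 (by linarith)
      (by linarith) (by linarith) h3' (by linarith) (by linarith) (by rw [hq] at key; linarith)
  refine ⟨?_, fun x y z x' y' z' h h' => uniq1 P n hp2 h h',
    fun x y z x' y' z' h h' => uniq2 P n hp2 h h'⟩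
  constructor
  · intro hnd
    -- n = q * (n / q) + n % q, with 1 ≤ n % q ≤ q - 1
    have hdm : q * (n / q) + n % q = n := Int.mul_ediv_add_emod n q
    have hr0 : 0 ≤ n % q := Int.emod_nonneg _ (by linarith)
    have hrq : n % q < q := Int.emod_lt_of_pos _ hq0
    have hrne : n % q ≠ 0 := by
      intro h0
      exact hnd (Int.dvd_of_emod_eq_zero h0)
    have h1 : 1 ≤ n % q := by omega
    have h2 : n % q ≤ P ^ 2 + P := by omega
    have hAB : (∃ x y z : ℤ, n = x + P * y + P ^ 2 * z ∧ x > y ∧ y ≥ z ∧ x - z ≤ P) ∨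
        (∃ x y z : ℤ, n = P ^ 2 * x + P * y + z ∧ x ≥ y ∧ y > z ∧ x - z ≤ P) := by
      rcases key_exists P (n % q) hp2 h1 h2 with ⟨a, c, hs, ha, hap, hc, hca⟩ |
        ⟨a, c, hs, ha, hap, hc, hca⟩
      · refine Or.inl ⟨a + (n / q), c + (n / q), n / q, ?_, by linarith, by linarith, by linarith⟩
        have : n = q * (n / q) + (a + P * c) := by rw [← hs]; linarith
        rw [hq] at this; linear_combination this
      · refine Or.inr ⟨n / q + 1, (n / q + 1) - c, (n / q + 1) - a, ?_, by linarith, by linarith,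
          by linarith⟩
        have : n = q * (n / q + 1) - (a + P * c) := by
          have h5 : a + P * c = q - n % q := by rw [hq]; linarith
          rw [h5]; linarith
        rw [hq] at this; linear_combination this
    rcases hAB with hA | hB
    · exact Or.inl ⟨hA, fun hB => notboth ⟨hA, hB⟩⟩
    · exact Or.inr ⟨hB, fun hA => notboth ⟨hA, hB⟩⟩
  · rintro hxor ⟨m, hm⟩
    rcases hxor with ⟨⟨x, y, z, he, h1, h2, h3⟩, -⟩ | ⟨⟨x, y, z, he, h1, h2, h3⟩, -⟩
    · have hb := s_bounds P (x - z) (y - z) hp2 (by linarith) h3 (by linarith) (by linarith)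
      have key : q * (m - z) = (x - z) + P * (y - z) := by
        rw [hq]; linear_combination he - hm
      rcases lt_trichotomy (m - z) 1 with hh | hh | hh
      · have h0 : q * (m - z) ≤ 0 := by
          have := mul_le_mul_of_nonneg_left (by linarith : m - z ≤ 0) (by linarith : (0:ℤ) ≤ q)
          simpa using this
        linarith [hb.1]
      · rw [hh, mul_one] at key; rw [hq] at key; linarith [hb.2, hp2]
      · have h0 : q * 2 ≤ q * (m - z) := mul_le_mul_of_nonneg_left (by linarith) (by linarith)
        linarith [hb.2, sq_nonneg P]
    · have hb := s_bounds P (x - z) (x - y) hp2 (by linarith) h3 (by linarith) (by linarith)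
      have key : q * (x - m) = (x - z) + P * (x - y) := by
        rw [hq]; linear_combination hm - he
      rcases lt_trichotomy (x - m) 1 with hh | hh | hh
      · have h0 : q * (x - m) ≤ 0 := by
          have := mul_le_mul_of_nonneg_left (by linarith : x - m ≤ 0) (by linarith : (0:ℤ) ≤ q)
          simpa using this
        linarith [hb.1]
      · rw [hh, mul_one] at key; rw [hq] at key; linarith [hb.2, hp2]
      · have h0 : q * 2 ≤ q * (x - m) := mul_le_mul_of_nonneg_left (by linarith) (by linarith)
        linarith [hb.2, sq_nonneg P]
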